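/- arXiv:0901.0205 — 5 statements merged into one kernel-verified Lean document; each statement's English description precedes it below -/
import Mathlib

section
/- For every finite multigraph (V, E, a, b) with nonnegative edge-end weights w there exists an orientation O such that for every vertex v, the weighted in-degree of v under O, namely the sum of w e v over all edges e with O e = v, is at least ( (sum of w e v over all edges e incident to v) − (maximum of w e v over all edges e incident to v) ) / 2, where the maximum is taken to be 0 if no edge is incident to v. -/
namespace WOEAux

variable {α : Type*}

/-- Pair up consecutive elements of a list, dropping a possible last unpaired element. -/
def pairUp : List α → List (α × α)
  | [] => []
  | [_] => []
  | x :: y :: r => (x, y) :: pairUp r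

theorem mem_of_mem_pairUp : ∀ {l : List α} {p : α × α}, p ∈ pairUp l → p.1 ∈ l ∧ p.2 ∈ l
  | [], p, h => by simp [pairUp] at h
  | [x], p, h => by simp [pairUp] at h
  | x :: y :: r, p, h => by
    rw [pairUp, List.mem_cons] at h
    rcases h with h | h
    · subst h; simp
    · have := mem_of_mem_pairUp h
      exact ⟨List.mem_cons_of_mem _ (List.mem_cons_of_mem _ this.1),
             List.mem_cons_of_mem _ (List.mem_cons_of_mem _ this.2)⟩

theorem pairUp_fst_ne_snd : ∀ {l : List α}, l.Nodup → ∀ {p : α × α}, p ∈ pairUp l → p.1 ≠ p.2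
  | [], _, p, h => by simp [pairUp] at h
  | [x], _, p, h => by simp [pairUp] at h
  | x :: y :: r, hnd, p, h => by
    rw [pairUp, List.mem_cons] at h
    rcases h with h | h
    · subst h
      have := (List.nodup_cons.mp hnd).1
      simp only [List.mem_cons] at this
      intro hxy
      exact this (Or.inl hxy)
    · exact pairUp_fst_ne_snd (List.nodup_cons.mp (List.nodup_cons.mp hnd).2).2 h

theorem pairUp_eq_of_shared : ∀ {l : List α}, l.Nodup → ∀ {p q : α × α},
    p ∈ pairUp l → q ∈ pairUp l →
    (p.1 = q.1 ∨ p.1 = q.2 ∨ p.2 = q.1 ∨ p.2 = q.2) → p = q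
  | [], _, p, q, hp, _, _ => by simp [pairUp] at hp
  | [x], _, p, q, hp, _, _ => by simp [pairUp] at hp
  | x :: y :: r, hnd, p, q, hp, hq, hsh => by
    have hx : x ∉ y :: r := (List.nodup_cons.mp hnd).1
    have hnd' : (y :: r).Nodup := (List.nodup_cons.mp hnd).2
    have hy : y ∉ r := (List.nodup_cons.mp hnd').1
    have hndr : r.Nodup := (List.nodup_cons.mp hnd').2
    have hxr : x ∉ r := fun hh => hx (List.mem_cons_of_mem _ hh)
    rw [pairUp, List.mem_cons] at hp hq
    rcases hp with hp | hp <;> rcases hq with hq | hq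
    · rw [hp, hq]
    · -- p = (x,y), q ∈ pairUp r : shared element impossible
      exfalso
      have hq1 : q.1 ∈ r := (mem_of_mem_pairUp hq).1
      have hq2 : q.2 ∈ r := (mem_of_mem_pairUp hq).2
      subst hp
      rcases hsh with h | h | h | h
      · have h' : x = q.1 := h; exact hxr (h' ▸ hq1)
      · have h' : x = q.2 := h; exact hxr (h' ▸ hq2)
      · have h' : y = q.1 := h; exact hy (h' ▸ hq1)
      · have h' : y = q.2 := h; exact hy (h' ▸ hq2)
    · exfalso
      have hp1 : p.1 ∈ r := (mem_of_mem_pairUp hp).1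
      have hp2 : p.2 ∈ r := (mem_of_mem_pairUp hp).2
      subst hq
      rcases hsh with h | h | h | h
      · have h' : p.1 = x := h; exact hxr (h' ▸ hp1)
      · have h' : p.1 = y := h; exact hy (h' ▸ hp1)
      · have h' : p.2 = x := h; exact hxr (h' ▸ hp2)
      · have h' : p.2 = y := h; exact hy (h' ▸ hp2)
    · exact pairUp_eq_of_shared hndr hp hq hsh

theorem pairUp_nodup : ∀ {l : List α}, l.Nodup → (pairUp l).Nodup
  | [], _ => by simp [pairUp]
  | [x], _ => by simp [pairUp]
  | x :: y :: r, hnd => by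
    have hx : x ∉ y :: r := (List.nodup_cons.mp hnd).1
    have hnd' : (y :: r).Nodup := (List.nodup_cons.mp hnd).2
    have hndr : r.Nodup := (List.nodup_cons.mp hnd').2
    rw [pairUp, List.nodup_cons]
    refine ⟨fun hmem => ?_, pairUp_nodup hndr⟩
    have := (mem_of_mem_pairUp hmem).1
    exact hx (List.mem_cons_of_mem _ this)

theorem pairUp_rel {r : α → α → Prop} : ∀ {l : List α}, l.Pairwise r →
    ∀ {p : α × α}, p ∈ pairUp l → r p.1 p.2
  | [], _, p, hp => by simp [pairUp] at hp
  | [x], _, p, hp => by simp [pairUp] at hp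
  | x :: y :: t, hs, p, hp => by
    rw [pairUp, List.mem_cons] at hp
    rcases hp with hp | hp
    · subst hp
      exact List.rel_of_pairwise_cons hs (a' := y) (by simp)
    · exact pairUp_rel (hs.of_cons.of_cons) hp

theorem sum_le_headD_add_two_mul (g : α → ℝ) :
    ∀ l : List α, l.Pairwise (fun x y => g y ≤ g x) → (∀ x ∈ l, 0 ≤ g x) →
      (l.map g).sum ≤ (l.map g).headD 0 + 2 * ((pairUp l).map (fun p => g p.2)).sum
  | [], _, _ => by simp [pairUp]
  | [x], _, _ => by simp [pairUp]
  | x :: y :: t, hs, hn => by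
    have hs' : (y :: t).Pairwise (fun x y => g y ≤ g x) := hs.of_cons
    have ht : t.Pairwise (fun x y => g y ≤ g x) := hs'.of_cons
    have IH := sum_le_headD_add_two_mul g t ht (fun z hz => hn z (by simp [hz]))
    have hhead : (t.map g).headD 0 ≤ g y := by
      cases t with
      | nil => simpa using hn y (by simp)
      | cons z t' =>
        simpa using (List.rel_of_pairwise_cons hs' (a' := z) (by simp))
    simp only [pairUp, List.map_cons, List.sum_cons, List.headD_cons] at *
    linarith

/-- Hall-type selection of distinct representatives for the pairs. -/
theorem exists_injective_reps {V E : Type*} [Fintype V] [Fintype E]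
    (A B : E → V) (L : V → List E) (hnd : ∀ v, (L v).Nodup)
    (hinc : ∀ v e, e ∈ L v → v = A e ∨ v = B e) :
    ∃ f : {q : V × E × E // q.2 ∈ pairUp (L q.1)} → E,
      Function.Injective f ∧ ∀ q, f q = q.val.2.1 ∨ f q = q.val.2.2 := by
  classical
  set ι := {q : V × E × E // q.2 ∈ pairUp (L q.1)} with hι
  set t : ι → Finset E := fun q => {q.val.2.1, q.val.2.2} with ht
  have hmemL : ∀ (q : ι) (e : E), e ∈ t q → e ∈ L q.val.1 := by
    intro q e he
    simp only [ht, Finset.mem_insert, Finset.mem_singleton] at he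
    rcases he with h | h
    · exact h ▸ (mem_of_mem_pairUp q.property).1
    · exact h ▸ (mem_of_mem_pairUp q.property).2
  have hfiber : ∀ (s : Finset ι) (e : E), (s.filter (fun q => e ∈ t q)).card ≤ 2 := by
    intro s e
    have hcard : (s.filter (fun q => e ∈ t q)).card ≤ ({A e, B e} : Finset V).card := by
      apply Finset.card_le_card_of_injOn (fun q => q.val.1)
      · intro q hq
        rw [Finset.mem_coe, Finset.mem_filter] at hq
        have hLq : e ∈ L q.val.1 := hmemL q e hq.2
        rcases hinc _ _ hLq with h | h <;> simp [h]
      · intro q hq q' hq' hvv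
        simp only [Finset.coe_filter, Set.mem_setOf_eq] at hq hq'
        have he : e = q.val.2.1 ∨ e = q.val.2.2 := by
          have := hq.2; simp only [ht, Finset.mem_insert, Finset.mem_singleton] at this
          exact this
        have he' : e = q'.val.2.1 ∨ e = q'.val.2.2 := by
          have := hq'.2; simp only [ht, Finset.mem_insert, Finset.mem_singleton] at this
          exact this
        have hvv' : q.val.1 = q'.val.1 := hvv
        have hq'prop : q'.val.2 ∈ pairUp (L q.val.1) := by
          rw [hvv']; exact q'.property
        have hshared : q.val.2.1 = q'.val.2.1 ∨ q.val.2.1 = q'.val.2.2 ∨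
            q.val.2.2 = q'.val.2.1 ∨ q.val.2.2 = q'.val.2.2 := by
          rcases he with h | h <;> rcases he' with h' | h'
          · exact Or.inl (h ▸ h')
          · exact Or.inr (Or.inl (h ▸ h'))
          · exact Or.inr (Or.inr (Or.inl (h ▸ h')))
          · exact Or.inr (Or.inr (Or.inr (h ▸ h')))
        have hpq : q.val.2 = q'.val.2 :=
          pairUp_eq_of_shared (hnd q.val.1) q.property hq'prop hshared
        apply Subtype.ext
        exact Prod.ext hvv' hpq
    refine hcard.trans ?_
    refine (Finset.card_insert_le _ _).trans ?_
    simp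
  have hall : ∀ s : Finset ι, s.card ≤ (s.biUnion t).card := by
    intro s
    have h2 : ∀ q : ι, (t q).card = 2 := by
      intro q
      rw [ht]
      rw [Finset.card_insert_of_notMem (by
        simp only [Finset.mem_singleton]
        exact pairUp_fst_ne_snd (hnd _) q.property), Finset.card_singleton]
    have key : 2 * s.card ≤ 2 * (s.biUnion t).card := by
      calc 2 * s.card = ∑ q ∈ s, (t q).card := by
            rw [Finset.sum_congr rfl (fun q _ => h2 q), Finset.sum_const, smul_eq_mul,
              mul_comm]
        _ = ∑ q ∈ s, ((s.biUnion t).filter (fun e => e ∈ t q)).card := by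
            apply Finset.sum_congr rfl
            intro q hq
            congr 1
            ext e
            simp only [Finset.mem_filter, Finset.mem_biUnion, iff_def]
            constructor
            · intro he; exact ⟨⟨q, hq, he⟩, he⟩
            · intro he; exact he.2
        _ = ∑ q ∈ s, ∑ e ∈ s.biUnion t, (if e ∈ t q then 1 else 0) := by
            apply Finset.sum_congr rfl
            intro q _
            rw [Finset.card_filter]
        _ = ∑ e ∈ s.biUnion t, ∑ q ∈ s, (if e ∈ t q then 1 else 0) := Finset.sum_comm
        _ = ∑ e ∈ s.biUnion t, (s.filter (fun q => e ∈ t q)).card := by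
            apply Finset.sum_congr rfl
            intro e _
            rw [Finset.card_filter]
        _ ≤ ∑ _e ∈ s.biUnion t, 2 := Finset.sum_le_sum (fun e _ => hfiber s e)
        _ = 2 * (s.biUnion t).card := by rw [Finset.sum_const, smul_eq_mul, mul_comm]
    omega
  obtain ⟨f, hfinj, hfmem⟩ := (Finset.all_card_le_biUnion_card_iff_exists_injective t).mp hall
  refine ⟨f, hfinj, fun q => ?_⟩
  have := hfmem q
  simpa only [ht, Finset.mem_insert, Finset.mem_singleton] using this

end WOEAux

/-- For every finite multigraph `(V, E, a, b)` with nonnegative edge-end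
weights `w` there exists an orientation `O` (assigning to each edge a head among its two
endpoints) such that for every vertex `v`, the weighted in-degree of `v` under `O` is at
least `((sum of w e v over edges incident to v) - (max of w e v over edges incident to v))/2`,
the maximum being `0` when no edge is incident to `v`. -/
theorem weighted_orientation_exists
    {V E : Type*} [Fintype V] [Fintype E] [DecidableEq V]
    (a b : E → V) (w : E → V → ℝ) (hw : ∀ e v, 0 ≤ w e v) :
    ∃ O : E → V,
      (∀ e, O e = a e ∨ O e = b e) ∧
      ∀ v : V,
        (∑ e ∈ Finset.univ.filter (fun e => O e = v), w e v) ≥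
          ((∑ e ∈ Finset.univ.filter (fun e => a e = v ∨ b e = v), w e v) -
            (if h : (Finset.univ.filter (fun e => a e = v ∨ b e = v)).Nonempty then
              (Finset.univ.filter (fun e => a e = v ∨ b e = v)).sup' h (fun e => w e v)
            else 0)) / 2 := by
  classical
  -- the non-loop edges incident to `v`
  set NL : V → Finset E := fun v =>
    Finset.univ.filter (fun e => (a e = v ∨ b e = v) ∧ a e ≠ b e) with hNL
  -- sorted (weight-decreasing) list of non-loop edges incident to `v`
  set L : V → List E := fun v =>
    List.insertionSort (fun x y => w y v ≤ w x v) (NL v).toList with hL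
  have hLsorted : ∀ v, (L v).Pairwise (fun x y => w y v ≤ w x v) := by
    intro v
    haveI : IsTotal E (fun x y => w y v ≤ w x v) := ⟨fun x y => le_total _ _⟩
    haveI : IsTrans E (fun x y => w y v ≤ w x v) := ⟨fun x y z h1 h2 => le_trans h2 h1⟩
    exact List.pairwise_insertionSort _ _
  have hLperm : ∀ v, List.Perm (L v) (NL v).toList := fun v => List.perm_insertionSort _ _
  have hLnd : ∀ v, (L v).Nodup := fun v => ((hLperm v).nodup_iff).mpr (Finset.nodup_toList _)
  have hLmem : ∀ v e, e ∈ L v ↔ ((a e = v ∨ b e = v) ∧ a e ≠ b e) := by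
    intro v e
    rw [(hLperm v).mem_iff, Finset.mem_toList, hNL]
    simp
  set ι := {q : V × E × E // q.2 ∈ WOEAux.pairUp (L q.1)} with hι
  obtain ⟨f, hfinj, hfmem⟩ := WOEAux.exists_injective_reps a b L hLnd
    (fun v e he => (((hLmem v e).mp he).1).imp Eq.symm Eq.symm)
  have hfL : ∀ q : ι, f q ∈ L q.val.1 := by
    intro q
    rcases hfmem q with h | h
    · rw [h]; exact (WOEAux.mem_of_mem_pairUp q.property).1
    · rw [h]; exact (WOEAux.mem_of_mem_pairUp q.property).2
  set O : E → V := fun e => if h : ∃ q : ι, f q = e then (Classical.choose h).val.1 else a e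
    with hO
  have hOmem : ∀ e, O e = a e ∨ O e = b e := by
    intro e
    rw [hO]
    dsimp only
    split_ifs with h
    · have hfq : f (Classical.choose h) = e := Classical.choose_spec h
      have hmem : e ∈ L (Classical.choose h).val.1 := by
        have hm := hfL (Classical.choose h); rwa [hfq] at hm
      rcases ((hLmem _ e).mp hmem).1 with h' | h'
      · exact Or.inl h'.symm
      · exact Or.inr h'.symm
    · exact Or.inl rfl
  refine ⟨O, hOmem, ?_⟩
  intro v
  set Fv : Finset E := Finset.univ.filter (fun e => a e = v ∨ b e = v) with hFv
  set M : ℝ := (if h : Fv.Nonempty then Fv.sup' h (fun e => w e v) else 0) with hM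
  have hM0 : 0 ≤ M := by
    rw [hM]
    split_ifs with h
    · obtain ⟨e, he⟩ := h
      exact le_trans (hw e v) (Finset.le_sup' (fun e => w e v) he)
    · exact le_refl 0
  set Loops : Finset E := Finset.univ.filter (fun e => a e = v ∧ a e = b e) with hLoops
  have hSL0 : 0 ≤ ∑ e ∈ Loops, w e v := Finset.sum_nonneg (fun e _ => hw e v)
  have hSplit : ∑ e ∈ Fv, w e v =
      (∑ e ∈ Loops, w e v) + ((L v).map (fun e => w e v)).sum := by
    have h1 : ∑ e ∈ Fv, w e v =
        (∑ e ∈ Fv.filter (fun e => a e = b e), w e v) +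
          (∑ e ∈ Fv.filter (fun e => ¬(a e = b e)), w e v) :=
      (Finset.sum_filter_add_sum_filter_not _ _ _).symm
    have h2 : Fv.filter (fun e => a e = b e) = Loops := by
      ext e
      simp only [hFv, hLoops, Finset.mem_filter, Finset.mem_univ, true_and]
      constructor
      · rintro ⟨h | h, hab⟩
        · exact ⟨h, hab⟩
        · exact ⟨hab.trans h, hab⟩
      · rintro ⟨hav, hab⟩
        exact ⟨Or.inl hav, hab⟩
    have h3 : Fv.filter (fun e => ¬(a e = b e)) = NL v := by
      ext e
      simp only [hFv, hNL, Finset.mem_filter, Finset.mem_univ, true_and]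
    have h4 : ∑ e ∈ NL v, w e v = ((L v).map (fun e => w e v)).sum := by
      rw [← List.sum_toFinset _ (hLnd v)]
      congr 1
      rw [List.toFinset_eq_of_perm _ _ (hLperm v), Finset.toList_toFinset]
    rw [h1, h2, h3, h4]
  set P : Finset ι := Finset.univ.filter (fun q : ι => q.val.1 = v) with hP
  set R : Finset E := P.image f with hR
  have hLoopsIn : ∀ e ∈ Loops, O e = v := by
    intro e he
    simp only [hLoops, Finset.mem_filter, Finset.mem_univ, true_and] at he
    rw [hO]
    dsimp only
    split_ifs with h
    · exfalso
      have hfq : f (Classical.choose h) = e := Classical.choose_spec h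
      have hmem : e ∈ L (Classical.choose h).val.1 := by
        have hm := hfL (Classical.choose h); rwa [hfq] at hm
      exact ((hLmem _ e).mp hmem).2 he.2
    · exact he.1
  have hRIn : ∀ e ∈ R, O e = v := by
    intro e he
    rw [hR, Finset.mem_image] at he
    obtain ⟨q, hqP, hqe⟩ := he
    have hv : q.val.1 = v := (Finset.mem_filter.mp hqP).2
    rw [hO]
    dsimp only
    have h : ∃ q' : ι, f q' = e := ⟨q, hqe⟩
    rw [dif_pos h]
    have hspec : f (Classical.choose h) = e := Classical.choose_spec h
    have : Classical.choose h = q := hfinj (by rw [hspec, hqe])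
    rw [this, hv]
  have hdisj : Disjoint Loops R := by
    rw [Finset.disjoint_left]
    intro e heL heR
    rw [hR, Finset.mem_image] at heR
    obtain ⟨q, _, hqe⟩ := heR
    have hmem : e ∈ L q.val.1 := hqe ▸ hfL q
    simp only [hLoops, Finset.mem_filter, Finset.mem_univ, true_and] at heL
    exact ((hLmem _ e).mp hmem).2 heL.2
  have hIn1 : (∑ e ∈ Loops, w e v) + (∑ e ∈ R, w e v) ≤
      ∑ e ∈ Finset.univ.filter (fun e => O e = v), w e v := by
    rw [← Finset.sum_union hdisj]
    apply Finset.sum_le_sum_of_subset_of_nonneg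
    · intro e he
      rw [Finset.mem_union] at he
      simp only [Finset.mem_filter, Finset.mem_univ, true_and]
      rcases he with h | h
      · exact hLoopsIn e h
      · exact hRIn e h
    · exact fun e _ _ => hw e v
  have hIm : ∑ e ∈ R, w e v = ∑ q ∈ P, w (f q) v := by
    rw [hR]
    exact Finset.sum_image (fun q _ q' _ h => hfinj h)
  have hPR : ∑ q ∈ P, w q.val.2.2 v ≤ ∑ q ∈ P, w (f q) v := by
    apply Finset.sum_le_sum
    intro q hq
    have hv : q.val.1 = v := (Finset.mem_filter.mp hq).2
    have hrel : w q.val.2.2 q.val.1 ≤ w q.val.2.1 q.val.1 :=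
      WOEAux.pairUp_rel (hLsorted q.val.1) q.property
    rw [hv] at hrel
    rcases hfmem q with h | h
    · rw [h]; exact hrel
    · rw [h]
  have hPsum : ∑ q ∈ P, w q.val.2.2 v =
      ((WOEAux.pairUp (L v)).map (fun p => w p.2 v)).sum := by
    rw [← List.sum_toFinset _ (WOEAux.pairUp_nodup (hLnd v))]
    have himg : P.image (fun q : ι => q.val.2) = (WOEAux.pairUp (L v)).toFinset := by
      ext p
      simp only [Finset.mem_image, List.mem_toFinset]
      constructor
      · rintro ⟨q, hqP, rfl⟩
        have hv : q.val.1 = v := (Finset.mem_filter.mp hqP).2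
        rw [← hv]
        exact q.property
      · intro hp
        refine ⟨⟨(v, p), hp⟩, ?_, rfl⟩
        simp [hP]
    rw [← himg]
    rw [Finset.sum_image ?_]
    intro q hq q' hq' hpp
    have hv : q.val.1 = v := (Finset.mem_filter.mp hq).2
    have hv' : q'.val.1 = v := (Finset.mem_filter.mp hq').2
    apply Subtype.ext
    exact Prod.ext (hv.trans hv'.symm) hpp
  have harith := WOEAux.sum_le_headD_add_two_mul (fun e => w e v) (L v) (hLsorted v)
    (fun x _ => hw x v)
  have hhead : ((L v).map (fun e => w e v)).headD 0 ≤ M := by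
    cases hLv : L v with
    | nil => simpa using hM0
    | cons x xs =>
      have hx : x ∈ L v := by rw [hLv]; simp
      have hxF : x ∈ Fv := by
        rw [hFv]
        simp only [Finset.mem_filter, Finset.mem_univ, true_and]
        exact ((hLmem v x).mp hx).1
      have hne : Fv.Nonempty := ⟨x, hxF⟩
      rw [hM, dif_pos hne]
      simp only [List.map_cons, List.headD_cons]
      exact Finset.le_sup' (fun e => w e v) hxF
  rw [ge_iff_le]
  linarith [hIn1, hIm, hPR, hPsum, hSplit, harith, hhead, hM0, hSL0]
end

section
/- Let T be a finite tree whose vertex set is partitioned into a set 𝒜 of agents and a set I of items, whose every edge joins an agent to an item, and in which every item vertex has degree at most 2. Then for every agent A ∈ 𝒜 there exists an injective function f from 𝒜 \ {A} to I such that for every agent A' ∈ 𝒜 \ {A}, the item f A' is adjacent to A' in T. -/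
lemma exists_adj_dist_pred {V : Type*} (T : SimpleGraph V) (hconn : T.Connected)
    {u A : V} (h : u ≠ A) : ∃ v, T.Adj u v ∧ T.dist v A + 1 = T.dist u A := by
  obtain ⟨p, hp⟩ := hconn.exists_walk_length_eq_dist u A
  cases p with
  | nil => exact absurd rfl h
  | cons hadj q =>
    rename_i v
    refine ⟨v, hadj, le_antisymm ?_ ?_⟩
    · have h1 : T.dist v A ≤ q.length := SimpleGraph.dist_le q
      simp only [SimpleGraph.Walk.length_cons] at hp
      omega
    · have h2 : T.dist u A ≤ T.dist u v + T.dist v A := SimpleGraph.Connected.dist_triangle hconn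
      have h3 : T.dist u v = 1 := SimpleGraph.dist_eq_one_iff_adj.mpr hadj
      omega

/-- Let `T` be a finite tree on vertex set `V`, whose vertices are
partitioned into agents (`Ag`) and items (the complement of `Ag`), such that every edge joins
an agent to an item and every item vertex has degree at most `2`. Then for every agent `A`
there is a function `f`, injective on `Ag \ {A}`, assigning to every other agent `A'` an item
`f A'` adjacent to `A'` in `T`. -/
theorem tree_assignment_exists
    {V : Type*} [Fintype V] (T : SimpleGraph V) (hT : T.IsTree)
    (Ag : Set V)
    (hbip : ∀ u v, T.Adj u v → (u ∈ Ag ↔ v ∉ Ag))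
    (hdeg : ∀ v, v ∉ Ag → (T.neighborSet v).ncard ≤ 2)
    (A : V) (hA : A ∈ Ag) :
    ∃ f : V → V, Set.InjOn f (Ag \ {A}) ∧
      ∀ A' ∈ Ag \ {A}, f A' ∉ Ag ∧ T.Adj A' (f A') := by
  have hconn := hT.isConnected
  have hex : ∀ x ∈ Ag \ {A}, ∃ v, T.Adj x v ∧ T.dist v A + 1 = T.dist x A := by
    intro x hx
    exact exists_adj_dist_pred T hconn hx.2
  choose! f hf1 hf2 using hex
  have hitem : ∀ x ∈ Ag \ {A}, f x ∉ Ag := fun x hx => (hbip x (f x) (hf1 x hx)).mp hx.1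
  refine ⟨f, ?_, fun A' hA' => ⟨hitem A' hA', hf1 A' hA'⟩⟩
  intro x hx y hy hfxy
  by_contra hne
  set v := f x with hv
  have hvAg : v ∉ Ag := hitem x hx
  have hvA : v ≠ A := fun h => hvAg (h ▸ hA)
  obtain ⟨w, hw1, hw2⟩ := exists_adj_dist_pred T hconn hvA
  have hdx : T.dist v A + 1 = T.dist x A := hf2 x hx
  have hdy : T.dist v A + 1 = T.dist y A := hfxy ▸ hf2 y hy
  have hwx : w ≠ x := by
    intro h; rw [h] at hw2; omega
  have hwy : w ≠ y := by
    intro h; rw [h] at hw2; omega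
  have hsub : ({x, y, w} : Set V) ⊆ T.neighborSet v := by
    intro z hz
    simp only [Set.mem_insert_iff, Set.mem_singleton_iff] at hz
    rcases hz with rfl | rfl | rfl
    · exact (hf1 _ hx).symm
    · exact hfxy ▸ (hf1 _ hy).symm
    · exact hw1
  have h3 : ({x, y, w} : Set V).ncard = 3 := by
    rw [Set.ncard_insert_of_notMem (by simp [hne, hwx.symm]) (Set.toFinite _),
        Set.ncard_pair hwy.symm]
  have := Set.ncard_le_ncard hsub (Set.toFinite _)
  have := hdeg v hvAg
  omega
end

section
/- Let I be a finite set of n items with n ≥ 1, let u : I → ℝ be nonnegative, let M > 0, and define u' : I → ℝ by u' i = u i · (2n / M) if u i ≥ M / (2n), and u' i = 0 otherwise. Then: (1) for every subset S ⊆ I with ∑_{i ∈ S} u i ≥ M, one has ∑_{i ∈ S} u' i ≥ n; and (2) for every real α ≥ 1 and every subset S ⊆ I with ∑_{i ∈ S} u' i ≥ n / α, one has ∑_{i ∈ S} u i ≥ M / (2α). -/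
/-- polynomially bounded utilities. Let `I` be a finite set of `n ≥ 1`
items, `u : I → ℝ` nonnegative, `M > 0`, and define `u' i = u i · (2n/M)` when
`u i ≥ M/(2n)` and `u' i = 0` otherwise. Then (1) every subset of total `u`-utility at least
`M` has total `u'`-utility at least `n`, and (2) for every `α ≥ 1`, every subset of total
`u'`-utility at least `n/α` has total `u`-utility at least `M/(2α)`. -/
theorem polynomially_bounded_utilities
    {I : Type*} [Fintype I] (n : ℕ) (hn : 1 ≤ n) (hcard : Fintype.card I = n)
    (u : I → ℝ) (hu : ∀ i, 0 ≤ u i) (M : ℝ) (hM : 0 < M)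
    (u' : I → ℝ)
    (hu' : ∀ i, u' i = if M / (2 * n) ≤ u i then u i * (2 * n / M) else 0) :
    (∀ S : Finset I, M ≤ ∑ i ∈ S, u i → (n : ℝ) ≤ ∑ i ∈ S, u' i) ∧
    (∀ α : ℝ, 1 ≤ α → ∀ S : Finset I,
      (n : ℝ) / α ≤ ∑ i ∈ S, u' i → M / (2 * α) ≤ ∑ i ∈ S, u i) := by
  have hn0 : (0 : ℝ) < n := by positivity
  have hc : (0 : ℝ) < 2 * n / M := by positivity
  constructor
  · intro S hS
    classical
    set T := S.filter (fun i => M / (2 * n) ≤ u i) with hT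
    have hsum : ∑ i ∈ S, u' i = (∑ i ∈ T, u i) * (2 * n / M) := by
      rw [Finset.sum_mul, hT, Finset.sum_filter,
        Finset.sum_congr rfl (fun i _ => hu' i)]
    have hsmall : ∑ i ∈ S \ T, u i ≤ M / 2 := by
      calc ∑ i ∈ S \ T, u i ≤ ∑ _i ∈ S \ T, M / (2 * n) := by
            apply Finset.sum_le_sum
            intro i hi
            have := Finset.mem_sdiff.mp hi
            have h2 := this.2
            rw [hT, Finset.mem_filter] at h2
            push_neg at h2
            exact le_of_lt (h2 this.1)
        _ = (S \ T).card * (M / (2 * n)) := by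
            rw [Finset.sum_const, nsmul_eq_mul]
        _ ≤ n * (M / (2 * n)) := by
            apply mul_le_mul_of_nonneg_right _ (by positivity)
            have : (S \ T).card ≤ Fintype.card I := Finset.card_le_card (Finset.subset_univ _)
            rw [hcard] at this
            exact_mod_cast this
        _ = M / 2 := by field_simp
    have hbig : M / 2 ≤ ∑ i ∈ T, u i := by
      have hsplit : ∑ i ∈ S, u i = ∑ i ∈ T, u i + ∑ i ∈ S \ T, u i := by
        have := Finset.sum_filter_add_sum_filter_not S (fun i => M / (2 * n) ≤ u i) u
        rw [hT, Finset.sdiff_eq_filter]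
        simp only [← this]
        congr 1
        apply Finset.sum_congr _ (fun _ _ => rfl)
        apply Finset.filter_congr
        intro i hi
        simp [hi]
      linarith
    rw [hsum]
    calc (n : ℝ) = (M / 2) * (2 * n / M) := by field_simp
      _ ≤ _ := mul_le_mul_of_nonneg_right hbig (le_of_lt hc)
  · intro α hα S hS
    have hα0 : (0 : ℝ) < α := lt_of_lt_of_le one_pos hα
    have hle : ∑ i ∈ S, u' i ≤ (∑ i ∈ S, u i) * (2 * n / M) := by
      rw [Finset.sum_mul]
      apply Finset.sum_le_sum
      intro i _
      rw [hu' i]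
      split
      · exact le_refl _
      · exact mul_nonneg (hu i) hc.le
    have key : (n : ℝ) / α ≤ (∑ i ∈ S, u i) * (2 * n / M) := le_trans hS hle
    calc M / (2 * α) = (n : ℝ) / α / (2 * n / M) := by field_simp
      _ ≤ ∑ i ∈ S, u i := (div_le_iff₀ hc).mpr key
end

section
/- Let I be a finite set, u : I → ℝ nonnegative, M a real number, and let z : Finset I → ℝ be nonnegative with ∑_{S ⊆ I} z S = 1 and such that z S > 0 implies ∑_{i ∈ S} u i ≥ M. Let J = { i ∈ I : ∑_{S : i ∈ S} z S = 1 } be the set of integrally allocated items, and let U = ⋃ { S : z S > 0 } be the union of the configurations in the support of z. Then for every item i* ∈ I \ J, one has ∑_{i ∈ U \ (J ∪ {i*})} u i ≥ M − ∑_{i ∈ J} u i. -/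
/-- utility bound for fractionally allocated items. Let `z` be a
nonnegative distribution over configurations (subsets of a finite item set `I`), each of total
utility at least `M`. Let `J` be the set of integrally allocated items (those whose total
`z`-mass is `1`) and `U` the union of the configurations in the support of `z`. Then for every
fractionally allocated item `i*` (i.e. `i* ∉ J`), the total utility of the items of `U`
other than `i*` and those of `J` is at least `M` minus the total utility of `J`. -/
theorem fractional_items_utility_bound
    {I : Type*} [Fintype I] [DecidableEq I]
    (u : I → ℝ) (hu : ∀ i, 0 ≤ u i) (M : ℝ)
    (z : Finset I → ℝ) (hz : ∀ S, 0 ≤ z S)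
    (hz1 : ∑ S : Finset I, z S = 1)
    (hzM : ∀ S, 0 < z S → M ≤ ∑ i ∈ S, u i)
    (J : Finset I)
    (hJ : ∀ i : I, i ∈ J ↔
      ∑ S ∈ Finset.univ.filter (fun S : Finset I => i ∈ S), z S = 1)
    (U : Finset I)
    (hU : ∀ i : I, i ∈ U ↔ ∃ S : Finset I, 0 < z S ∧ i ∈ S)
    (istar : I) (histar : istar ∉ J) :
    M - ∑ i ∈ J, u i ≤ ∑ i ∈ U \ insert istar J, u i := by
  -- find S with z S > 0 and istar ∉ S
  have hsplit : ∀ j : I,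
      ∑ S ∈ Finset.univ.filter (fun S : Finset I => j ∈ S), z S
        + ∑ S ∈ Finset.univ.filter (fun S : Finset I => j ∉ S), z S = 1 := by
    intro j
    rw [Finset.sum_filter_add_sum_filter_not]
    exact hz1
  have hpos : 0 < ∑ S ∈ Finset.univ.filter (fun S : Finset I => istar ∉ S), z S := by
    have h1 : ∑ S ∈ Finset.univ.filter (fun S : Finset I => istar ∈ S), z S ≠ 1 := by
      intro h; exact histar ((hJ istar).2 h)
    have hle : ∑ S ∈ Finset.univ.filter (fun S : Finset I => istar ∈ S), z S ≤ 1 := by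
      rw [← hz1]
      exact Finset.sum_le_sum_of_subset_of_nonneg (Finset.filter_subset _ _)
        (fun S _ _ => hz S)
    have := hsplit istar
    nlinarith [lt_of_le_of_ne hle h1]
  obtain ⟨S, hSmem, hSpos⟩ : ∃ S ∈ Finset.univ.filter (fun S : Finset I => istar ∉ S),
      0 < z S := by
    by_contra h
    push_neg at h
    have : ∑ S ∈ Finset.univ.filter (fun S : Finset I => istar ∉ S), z S ≤ 0 :=
      Finset.sum_nonpos (fun S hS => h S hS)
    linarith
  have hiS : istar ∉ S := (Finset.mem_filter.1 hSmem).2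
  -- J ⊆ S
  have hJS : J ⊆ S := by
    intro j hj
    by_contra hjS
    have h1 := (hJ j).1 hj
    have := hsplit j
    have hge : z S ≤ ∑ T ∈ Finset.univ.filter (fun T : Finset I => j ∉ T), z T := by
      refine Finset.single_le_sum (fun T _ => hz T) ?_
      simp [hjS]
    linarith
  have hSU : S ⊆ U := fun i hi => (hU i).2 ⟨S, hSpos, hi⟩
  have hsub : S \ J ⊆ U \ insert istar J := by
    intro i hi
    rw [Finset.mem_sdiff] at hi ⊢
    refine ⟨hSU hi.1, ?_⟩
    simp only [Finset.mem_insert, not_or]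
    exact ⟨fun h => hiS (h ▸ hi.1), hi.2⟩
  have hM := hzM S hSpos
  have hsplit2 : ∑ i ∈ S, u i = ∑ i ∈ S \ J, u i + ∑ i ∈ J, u i :=
    (Finset.sum_sdiff hJS).symm
  have hle2 : ∑ i ∈ S \ J, u i ≤ ∑ i ∈ U \ insert istar J, u i :=
    Finset.sum_le_sum_of_subset_of_nonneg hsub (fun i _ _ => hu i)
  linarith
end

section
/- There exists a natural number N such that for every natural number n ≥ N and every real ε with 8 · log(log n) / log n ≤ ε ≤ 1, setting h = 8/ε (a real number), one has ( (n : ℝ)^ε / (h + 1) )^h ≥ (n : ℝ)^7. -/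
/-- the counting inequality behind the layered-solution argument. There is
a natural number `N` such that for all `n ≥ N` and all real `ε` with
`8 log log n / log n ≤ ε ≤ 1`, setting `h = 8/ε`, one has `(n^ε / (h+1))^h ≥ n^7`
(real powers, natural logarithm). -/
theorem layered_counting_inequality :
    ∃ N : ℕ, ∀ n : ℕ, N ≤ n → ∀ ε : ℝ,
      8 * Real.log (Real.log n) / Real.log n ≤ ε → ε ≤ 1 →
      ((n : ℝ) ^ ε / (8 / ε + 1)) ^ (8 / ε) ≥ (n : ℝ) ^ (7 : ℝ) := by
  use 4096
  intro n hn ε hε1 hε2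
  have hn1 : (1:ℝ) ≤ (n:ℝ) := by exact_mod_cast Nat.one_le_iff_ne_zero.mpr (by omega)
  have hnR : (4096:ℝ) ≤ (n:ℝ) := by exact_mod_cast hn
  have hnpos : (0:ℝ) < n := by linarith
  set L := Real.log n with hLdef
  have hlog2 := Real.log_two_gt_d9
  have hL8 : (8:ℝ) ≤ L := by
    have h1 : Real.log 4096 ≤ L := Real.log_le_log (by norm_num) hnR
    have h2 : Real.log 4096 = 12 * Real.log 2 := by
      rw [show (4096:ℝ) = 2 ^ (12:ℕ) by norm_num, Real.log_pow]
      push_cast; ring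
    nlinarith
  have hLpos : (0:ℝ) < L := by linarith
  have hlogL2 : (2:ℝ) ≤ Real.log L := by
    have h1 : Real.log 8 ≤ Real.log L := Real.log_le_log (by norm_num) hL8
    have h2 : Real.log 8 = 3 * Real.log 2 := by
      rw [show (8:ℝ) = 2 ^ (3:ℕ) by norm_num, Real.log_pow]
      push_cast; ring
    nlinarith
  have hlogLpos : (0:ℝ) < Real.log L := by linarith
  have hq : (0:ℝ) < 8 * Real.log L / L := by positivity
  have hεpos : (0:ℝ) < ε := lt_of_lt_of_le hq hε1
  set h := 8 / ε with hhdef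
  have hhpos : (0:ℝ) < h := by positivity
  have hh8 : (8:ℝ) ≤ h := by
    rw [hhdef, le_div_iff₀ hεpos]; nlinarith
  -- h ≤ L / log L
  have hhle : h ≤ L / Real.log L := by
    rw [hhdef, div_le_div_iff₀ hεpos hlogLpos]
    calc 8 * Real.log L = (8 * Real.log L / L) * L := by field_simp
    _ ≤ ε * L := mul_le_mul_of_nonneg_right hε1 (le_of_lt hLpos)
    _ = L * ε := mul_comm ε L
  have hLdiv : L / Real.log L ≤ L / 2 := by
    apply div_le_div_of_nonneg_left (le_of_lt hLpos) (by norm_num) hlogL2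
  have hhL : h + 1 ≤ L := by
    have : L / 2 + 1 ≤ L := by linarith
    linarith [hhle.trans hLdiv]
  have hlogh1 : Real.log (h + 1) ≤ Real.log L := Real.log_le_log (by linarith) hhL
  have hlogh1nn : (0:ℝ) ≤ Real.log (h + 1) := Real.log_nonneg (by linarith)
  have hkey : h * Real.log (h + 1) ≤ L := by
    calc h * Real.log (h + 1) ≤ (L / Real.log L) * Real.log L :=
      mul_le_mul hhle hlogh1 hlogh1nn (by positivity)
    _ = L := div_mul_cancel₀ L (ne_of_gt hlogLpos)
  -- positivity of base
  have hApos : (0:ℝ) < (n : ℝ) ^ ε / (h + 1) := by positivity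
  have hRpos : (0:ℝ) < (n : ℝ) ^ (7:ℝ) := by positivity
  rw [ge_iff_le, ← Real.log_le_log_iff hRpos (Real.rpow_pos_of_pos hApos _)]
  rw [Real.log_rpow hnpos, Real.log_rpow hApos, Real.log_div (by positivity) (by positivity),
    Real.log_rpow hnpos]
  have hεL : h * (ε * L) = 8 * L := by
    rw [hhdef]; field_simp
  calc 7 * L = 8 * L - L := by ring
  _ ≤ h * (ε * L) - h * Real.log (h + 1) := by rw [hεL]; linarith
  _ = h * (ε * L - Real.log (h + 1)) := by ring
end
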